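/- arXiv:0911.0404 — 6 statements merged into one kernel-verified Lean document; each statement's English description precedes it below -/
import Mathlib

section
/- Let A and B be finite abelian groups whose orders are coprime. Then the Helly dimension of the direct product satisfies κ(A × B) = max{κ(A), κ(B)}. -/
open Pointwise

/-- `C` is a left coset in the group `G`, i.e. a set of the form `g • H`
for some subgroup `H` of `G`. -/
def IsLeftCoset {G : Type*} [Group G] (C : Set G) : Prop :=
  ∃ (g : G) (H : Subgroup G), C = g • (H : Set G)

/-- `d` is a Helly bound for the group `G`: every finite system of left cosets
of `G` with empty intersection contains a subsystem of at most `d` cosets with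
empty intersection. -/
def IsHellyBound (G : Type*) [Group G] (d : ℕ) : Prop :=
  ∀ (m : ℕ) (C : Fin m → Set G), (∀ i, IsLeftCoset (C i)) → (⋂ i, C i) = ∅ →
    ∃ s : Finset (Fin m), s.card ≤ d ∧ (⋂ i ∈ s, C i) = ∅

/-- The Helly dimension `κ(G)` of a group `G`: the minimal natural number `d`
which is a Helly bound for `G`, and `∞` if there is no such `d`. -/
noncomputable def hellyDim (G : Type*) [Group G] : ℕ∞ :=
  sInf {d : ℕ∞ | ∃ n : ℕ, d = (n : ℕ∞) ∧ IsHellyBound G n}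

lemma isHellyBound_mono {G : Type*} [Group G] {n m : ℕ} (h : IsHellyBound G n) (hnm : n ≤ m) :
    IsHellyBound G m := by
  intro k C hC hI
  obtain ⟨s, hs, hs'⟩ := h k C hC hI
  exact ⟨s, hs.trans hnm, hs'⟩

lemma exists_isHellyBound (G : Type*) [Group G] [Fintype G] : ∃ n, IsHellyBound G n := by
  classical
  refine ⟨Fintype.card (Set G), ?_⟩
  intro m C hC hI
  rcases Nat.eq_zero_or_pos m with rfl | hm
  · exfalso
    have : (1 : G) ∈ ⋂ i : Fin 0, C i := by simp
    rw [hI] at this; exact this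
  have : Nonempty (Fin m) := ⟨⟨0, hm⟩⟩
  set f : Set G → Fin m := Function.invFun C with hf
  refine ⟨Finset.image (fun i => f (C i)) Finset.univ, ?_, ?_⟩
  · apply Finset.card_le_card_of_injOn (fun j => C j) (fun _ _ => Finset.mem_univ _)
    intro j1 hj1 j2 hj2 hC12
    simp only [Finset.coe_image, Set.mem_image] at hj1 hj2
    obtain ⟨i1, _, rfl⟩ := hj1
    obtain ⟨i2, _, rfl⟩ := hj2
    have e1 : C (f (C i1)) = C i1 := Function.invFun_eq ⟨i1, rfl⟩
    have e2 : C (f (C i2)) = C i2 := Function.invFun_eq ⟨i2, rfl⟩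
    have hC12' : C i1 = C i2 := e1.symm.trans (hC12.trans e2)
    exact congrArg f hC12'
  · rw [← hI]
    apply Set.eq_of_subset_of_subset
    · intro x hx
      simp only [Set.mem_iInter] at hx ⊢
      intro i
      have e1 : C (f (C i)) = C i := Function.invFun_eq ⟨i, rfl⟩
      rw [← e1]
      exact hx _ (Finset.mem_image.mpr ⟨i, Finset.mem_univ _, rfl⟩)
    · intro x hx
      simp only [Set.mem_iInter] at hx ⊢
      intro j hj
      exact hx j

open scoped Classical in
noncomputable def minBound (G : Type*) [Group G] [Fintype G] : ℕ :=
  Nat.find (exists_isHellyBound G)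

open scoped Classical in
lemma hellyDim_eq_minBound (G : Type*) [Group G] [Fintype G] :
    hellyDim G = (minBound G : ℕ∞) := by
  apply le_antisymm
  · exact sInf_le ⟨minBound G, rfl, Nat.find_spec (exists_isHellyBound G)⟩
  · apply le_sInf
    rintro d ⟨n, rfl, hn⟩
    exact_mod_cast Nat.find_min' (exists_isHellyBound G) hn

section Prod

variable {A B : Type*} [CommGroup A] [CommGroup B] [Fintype A] [Fintype B]

lemma smul_coe_prod (g : A × B) (HA : Subgroup A) (HB : Subgroup B) :
    g • ((HA.prod HB : Subgroup (A × B)) : Set (A × B)) =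
      (g.1 • (HA : Set A)) ×ˢ (g.2 • (HB : Set B)) := by
  ext ⟨a, b⟩
  simp only [Set.mem_smul_set_iff_inv_smul_mem, Set.mem_prod, SetLike.mem_coe,
    Subgroup.mem_prod, Prod.inv_mk, smul_eq_mul, Prod.mk_mul_mk]
  rfl

lemma key_fst (h : Nat.Coprime (Fintype.card A) (Fintype.card B))
    (H : Subgroup (A × B)) (x : A × B) (hx : x ∈ H) : ((x.1, 1) : A × B) ∈ H := by
  obtain ⟨k, hk1, hk2⟩ := Nat.chineseRemainder h 1 0
  have hxk : x ^ k ∈ H := pow_mem hx k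
  have e1 : x.1 ^ k = x.1 ^ 1 := pow_eq_pow_iff_modEq.mpr
    (Nat.ModEq.of_dvd orderOf_dvd_card hk1)
  have e2 : x.2 ^ k = x.2 ^ 0 := pow_eq_pow_iff_modEq.mpr
    (Nat.ModEq.of_dvd orderOf_dvd_card hk2)
  have : x ^ k = (x.1, 1) :=
    Prod.ext (by rw [Prod.pow_fst, e1, pow_one]) (by rw [Prod.pow_snd, e2, pow_zero])
  rwa [this] at hxk


lemma key_snd (h : Nat.Coprime (Fintype.card A) (Fintype.card B))
    (H : Subgroup (A × B)) (x : A × B) (hx : x ∈ H) : ((1, x.2) : A × B) ∈ H := by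
  obtain ⟨k, hk1, hk2⟩ := Nat.chineseRemainder h 0 1
  have hxk : x ^ k ∈ H := pow_mem hx k
  have e1 : x.1 ^ k = x.1 ^ 0 := pow_eq_pow_iff_modEq.mpr
    (Nat.ModEq.of_dvd orderOf_dvd_card hk1)
  have e2 : x.2 ^ k = x.2 ^ 1 := pow_eq_pow_iff_modEq.mpr
    (Nat.ModEq.of_dvd orderOf_dvd_card hk2)
  have : x ^ k = (1, x.2) :=
    Prod.ext (by rw [Prod.pow_fst, e1, pow_zero]) (by rw [Prod.pow_snd, e2, pow_one])
  rwa [this] at hxk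

lemma subgroup_split (h : Nat.Coprime (Fintype.card A) (Fintype.card B))
    (H : Subgroup (A × B)) :
    H = (H.map (MonoidHom.fst A B)).prod (H.map (MonoidHom.snd A B)) := by
  ext ⟨a, b⟩
  simp only [Subgroup.mem_prod, Subgroup.mem_map, MonoidHom.coe_fst, MonoidHom.coe_snd]
  constructor
  · intro hab
    exact ⟨⟨(a, b), hab, rfl⟩, ⟨(a, b), hab, rfl⟩⟩
  · rintro ⟨⟨x, hx, rfl⟩, ⟨y, hy, rfl⟩⟩
    have h1 : ((x.1, 1) : A × B) ∈ H := key_fst h H x hx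
    have h2 : ((1, y.2) : A × B) ∈ H := key_snd h H y hy
    have := mul_mem h1 h2
    simpa using this

lemma coset_prod (h : Nat.Coprime (Fintype.card A) (Fintype.card B))
    (C : Set (A × B)) (hC : IsLeftCoset C) :
    ∃ (CA : Set A) (CB : Set B), IsLeftCoset CA ∧ IsLeftCoset CB ∧ C = CA ×ˢ CB := by
  obtain ⟨g, H, rfl⟩ := hC
  refine ⟨g.1 • (H.map (MonoidHom.fst A B) : Set A),
    g.2 • (H.map (MonoidHom.snd A B) : Set B),
    ⟨g.1, _, rfl⟩, ⟨g.2, _, rfl⟩, ?_⟩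
  rw [← smul_coe_prod, ← subgroup_split h H]

lemma hellyBound_prod {a b : ℕ} (h : Nat.Coprime (Fintype.card A) (Fintype.card B))
    (ha : IsHellyBound A a) (hb : IsHellyBound B b) :
    IsHellyBound (A × B) (max a b) := by
  intro m C hC hI
  choose CA CB hCA hCB hCeq using fun i => coset_prod h (C i) (hC i)
  have hProd : (⋂ i, C i) = (⋂ i, CA i) ×ˢ (⋂ i, CB i) := by
    ext ⟨x, y⟩
    simp only [Set.mem_iInter, Set.mem_prod, hCeq]
    exact ⟨fun hh => ⟨fun i => (hh i).1, fun i => (hh i).2⟩, fun hh i => ⟨hh.1 i, hh.2 i⟩⟩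
  rw [hProd] at hI
  rcases Set.prod_eq_empty_iff.mp hI with hA | hB
  · obtain ⟨s, hs, hs'⟩ := ha m CA hCA hA
    refine ⟨s, hs.trans (le_max_left a b), ?_⟩
    apply Set.eq_empty_of_forall_notMem
    rintro ⟨x, y⟩ hxy
    simp only [Set.mem_iInter, hCeq, Set.mem_prod] at hxy
    have : x ∈ ⋂ i ∈ s, CA i := by
      simp only [Set.mem_iInter]; exact fun i hi => (hxy i hi).1
    rw [hs'] at this; exact this
  · obtain ⟨s, hs, hs'⟩ := hb m CB hCB hB
    refine ⟨s, hs.trans (le_max_right a b), ?_⟩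
    apply Set.eq_empty_of_forall_notMem
    rintro ⟨x, y⟩ hxy
    simp only [Set.mem_iInter, hCeq, Set.mem_prod] at hxy
    have : y ∈ ⋂ i ∈ s, CB i := by
      simp only [Set.mem_iInter]; exact fun i hi => (hxy i hi).2
    rw [hs'] at this; exact this

lemma hellyBound_fst {d : ℕ} (hd : IsHellyBound (A × B) d) : IsHellyBound A d := by
  intro m C hC hI
  set C' : Fin m → Set (A × B) := fun i => (C i) ×ˢ (Set.univ : Set B) with hC'
  have hcoset : ∀ i, IsLeftCoset (C' i) := by
    intro i
    obtain ⟨g, H, hg⟩ := hC i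
    refine ⟨(g, 1), H.prod ⊤, ?_⟩
    rw [smul_coe_prod, hC']
    simp [hg]
  have hI' : (⋂ i, C' i) = ∅ := by
    apply Set.eq_empty_of_forall_notMem
    rintro ⟨x, y⟩ hxy
    simp only [hC', Set.mem_iInter, Set.mem_prod, Set.mem_univ, and_true] at hxy
    have : x ∈ ⋂ i, C i := Set.mem_iInter.mpr hxy
    rw [hI] at this; exact this
  obtain ⟨s, hs, hs'⟩ := hd m C' hcoset hI'
  refine ⟨s, hs, ?_⟩
  apply Set.eq_empty_of_forall_notMem
  intro x hx
  simp only [Set.mem_iInter] at hx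
  have : ((x, 1) : A × B) ∈ ⋂ i ∈ s, C' i := by
    simp only [hC', Set.mem_iInter, Set.mem_prod, Set.mem_univ, and_true]
    exact fun i hi => hx i hi
  rw [hs'] at this; exact this

lemma hellyBound_snd {d : ℕ} (hd : IsHellyBound (A × B) d) : IsHellyBound B d := by
  intro m C hC hI
  set C' : Fin m → Set (A × B) := fun i => (Set.univ : Set A) ×ˢ (C i) with hC'
  have hcoset : ∀ i, IsLeftCoset (C' i) := by
    intro i
    obtain ⟨g, H, hg⟩ := hC i
    refine ⟨(1, g), (⊤ : Subgroup A).prod H, ?_⟩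
    rw [smul_coe_prod, hC']
    simp [hg]
  have hI' : (⋂ i, C' i) = ∅ := by
    apply Set.eq_empty_of_forall_notMem
    rintro ⟨x, y⟩ hxy
    simp only [hC', Set.mem_iInter, Set.mem_prod, Set.mem_univ, true_and] at hxy
    have : y ∈ ⋂ i, C i := Set.mem_iInter.mpr hxy
    rw [hI] at this; exact this
  obtain ⟨s, hs, hs'⟩ := hd m C' hcoset hI'
  refine ⟨s, hs, ?_⟩
  apply Set.eq_empty_of_forall_notMem
  intro y hy
  simp only [Set.mem_iInter] at hy
  have : ((1, y) : A × B) ∈ ⋂ i ∈ s, C' i := by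
    simp only [hC', Set.mem_iInter, Set.mem_prod, Set.mem_univ, true_and]
    exact fun i hi => hy i hi
  rw [hs'] at this; exact this

end Prod

/-- Let `A` and `B` be finite abelian groups of coprime order.  Then
`κ(A × B) = max {κ(A), κ(B)}`. -/
theorem hellyDim_prod_of_coprime (A B : Type*) [CommGroup A] [CommGroup B]
    [Fintype A] [Fintype B] (h : Nat.Coprime (Fintype.card A) (Fintype.card B)) :
    hellyDim (A × B) = max (hellyDim A) (hellyDim B) := by
  classical
  rw [hellyDim_eq_minBound (A × B), hellyDim_eq_minBound A, hellyDim_eq_minBound B]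
  have key : minBound (A × B) = max (minBound A) (minBound B) := by
    apply le_antisymm
    · exact Nat.find_min' _ (hellyBound_prod h (Nat.find_spec (exists_isHellyBound A))
        (Nat.find_spec (exists_isHellyBound B)))
    · exact max_le
        (Nat.find_min' _ (hellyBound_fst (Nat.find_spec (exists_isHellyBound (A × B)))))
        (Nat.find_min' _ (hellyBound_snd (Nat.find_spec (exists_isHellyBound (A × B)))))
  rw [key]; exact_mod_cast rfl
end

section
/- Let k be an algebraically closed (or merely infinite) field of characteristic p > 0, and let d be any natural number. Then there exist finitely many cosets of finite additive subgroups of (k, +) whose total intersection is empty, but such that any d of them have nonempty intersection. Consequently, the additive group of k has no finite Helly dimension. -/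
open Pointwise

/-- `C` is a coset in the additive group `G`, i.e. a set of the form `a + H`
for some additive subgroup `H` of `G`. -/
def IsAddCoset {G : Type*} [AddGroup G] (C : Set G) : Prop :=
  ∃ (a : G) (H : AddSubgroup G), C = a +ᵥ (H : Set G)

/-- `d` is a Helly bound for the additive group `G`: every finite system of
cosets of `G` with empty intersection contains a subsystem of at most `d`
cosets with empty intersection. -/
def IsAddHellyBound (G : Type*) [AddGroup G] (d : ℕ) : Prop :=
  ∀ (m : ℕ) (C : Fin m → Set G), (∀ i, IsAddCoset (C i)) → (⋂ i, C i) = ∅ →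
    ∃ s : Finset (Fin m), s.card ≤ d ∧ (⋂ i ∈ s, C i) = ∅

/-- The Helly dimension `κ(G)` of an additive group `G`. -/
noncomputable def addHellyDim (G : Type*) [AddGroup G] : ℕ∞ :=
  sInf {d : ℕ∞ | ∃ n : ℕ, d = (n : ℕ∞) ∧ IsAddHellyBound G n}

/-- A level set of an additive hom is a coset of its kernel. -/
lemma levelSet_eq_vadd_ker {G M : Type*} [AddCommGroup G] [AddCommGroup M]
    (f : G →+ M) (a : G) : {x | f x = f a} = a +ᵥ ((f.ker : AddSubgroup G) : Set G) := by
  ext x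
  simp only [Set.mem_setOf_eq, Set.mem_vadd_set, SetLike.mem_coe, AddMonoidHom.mem_ker,
    vadd_eq_add]
  constructor
  · intro hx
    exact ⟨x - a, by simp [map_sub, hx], by abel⟩
  · rintro ⟨y, hy, rfl⟩
    simp [map_add, hy]

/-- The key construction, giving the first half of the statement. -/
lemma exists_coset_system (k : Type*) [Field k] [Infinite k]
    (p : ℕ) (hp : p.Prime) [CharP k p] (d : ℕ) :
    ∃ (m : ℕ) (C : Fin m → Set k),
      (∀ i, ∃ (a : k) (H : AddSubgroup k), (H : Set k).Finite ∧ C i = a +ᵥ (H : Set k)) ∧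
      (⋂ i, C i) = ∅ ∧
      (∀ s : Finset (Fin m), s.card ≤ d → (⋂ i ∈ s, C i).Nonempty) := by
  haveI := Fact.mk hp
  letI : Algebra (ZMod p) k := ZMod.algebra k p
  -- pick `d+1` linearly independent elements of `k` over `𝔽_p`
  let b : Module.Basis (Module.Basis.ofVectorSpaceIndex (ZMod p) k) (ZMod p) k :=
    Module.Basis.ofVectorSpace (ZMod p) k
  haveI : Infinite (Module.Basis.ofVectorSpaceIndex (ZMod p) k) := by
    by_contra h
    haveI : Finite (Module.Basis.ofVectorSpaceIndex (ZMod p) k) := not_infinite_iff_finite.mp h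
    haveI : Fintype (Module.Basis.ofVectorSpaceIndex (ZMod p) k) := Fintype.ofFinite _
    haveI : Fintype k := Module.fintypeOfFintype b
    exact not_finite k
  let e : Fin (d + 1) ↪ (Module.Basis.ofVectorSpaceIndex (ZMod p) k) :=
    Fin.valEmbedding.trans (Infinite.natEmbedding _)
  let v : Fin (d + 1) → k := fun j => b (e j)
  have li : LinearIndependent (ZMod p) v := b.linearIndependent.comp e e.injective
  -- the embedding `φ` of the finite vector space `Fin (d+1) → ZMod p` into `k`
  let φ : (Fin (d + 1) → ZMod p) →+ k :=
    { toFun := fun x => ∑ j, x j • v j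
      map_zero' := by simp
      map_add' := fun x y => by
        simp only [Pi.add_apply, add_smul]
        exact Finset.sum_add_distrib }
  have φapp : ∀ x : Fin (d + 1) → ZMod p, φ x = ∑ j, x j • v j := fun _ => rfl
  have φinj : Function.Injective φ := by
    intro x y hxy
    have h0 : ∑ j, (x j - y j) • v j = 0 := by
      simp only [sub_smul, Finset.sum_sub_distrib]
      rw [← φapp, ← φapp, hxy, sub_self]
    have := Fintype.linearIndependent_iff.mp li (fun j => x j - y j) h0
    funext j
    have hj := this j
    rwa [sub_eq_zero] at hj
  -- the linear functionals and base points
  let f : Fin (d + 2) → ((Fin (d + 1) → ZMod p) →+ ZMod p) :=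
    Fin.lastCases (∑ j : Fin (d + 1), Pi.evalAddMonoidHom (fun _ => ZMod p) j)
      (fun j => Pi.evalAddMonoidHom (fun _ => ZMod p) j)
  let a : Fin (d + 2) → (Fin (d + 1) → ZMod p) :=
    Fin.lastCases (Pi.single (0 : Fin (d + 1)) ((d : ZMod p) + 2)) (fun j => Pi.single j 1)
  -- the cosets in the vector space
  let A : Fin (d + 2) → Set (Fin (d + 1) → ZMod p) := fun i => {x | f i x = f i (a i)}
  have hmemc : ∀ (j : Fin (d + 1)) (x : Fin (d + 1) → ZMod p),
      x ∈ A j.castSucc ↔ x j = 1 := by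
    intro j x
    have hf : f j.castSucc = Pi.evalAddMonoidHom (fun _ => ZMod p) j := by
      simp only [f, Fin.lastCases_castSucc]
    have ha : a j.castSucc = Pi.single j 1 := by
      simp only [a, Fin.lastCases_castSucc]
    simp only [A, Set.mem_setOf_eq, hf, ha, Pi.evalAddMonoidHom_apply, Pi.single_eq_same]
  have hmeml : ∀ x : Fin (d + 1) → ZMod p,
      x ∈ A (Fin.last (d + 1)) ↔ ∑ j, x j = (d : ZMod p) + 2 := by
    intro x
    have hf : f (Fin.last (d + 1)) =
        ∑ j : Fin (d + 1), Pi.evalAddMonoidHom (fun _ => ZMod p) j := by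
      simp only [f, Fin.lastCases_last]
    have ha : a (Fin.last (d + 1)) = Pi.single (0 : Fin (d + 1)) ((d : ZMod p) + 2) := by
      simp only [a, Fin.lastCases_last]
    simp only [A, Set.mem_setOf_eq, hf, ha, AddMonoidHom.finset_sum_apply,
      Pi.evalAddMonoidHom_apply, Finset.sum_pi_single', Finset.mem_univ, if_true]
  have hA : ∀ i, A i = a i +ᵥ (((f i).ker : AddSubgroup (Fin (d + 1) → ZMod p)) :
      Set (Fin (d + 1) → ZMod p)) := fun i => levelSet_eq_vadd_ker (f i) (a i)
  refine ⟨d + 2, fun i => φ '' (A i), ?_, ?_, ?_⟩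
  · -- each image is a coset of a finite subgroup
    intro i
    refine ⟨φ (a i), ((f i).ker).map φ, ?_, ?_⟩
    · rw [AddSubgroup.coe_map]
      exact (Set.toFinite _).image φ
    · show φ '' (A i) = _
      rw [hA i, Set.image_vadd_distrib, AddSubgroup.coe_map]
  · -- the total intersection is empty
    have him : (⋂ i, φ '' (A i)) = φ '' (⋂ i, A i) :=
      (Set.InjOn.image_iInter_eq (φinj.injOn)).symm
    rw [him]
    suffices h : (⋂ i, A i) = ∅ by rw [h, Set.image_empty]
    rw [Set.eq_empty_iff_forall_notMem]
    intro x hx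
    have h1 : ∀ j : Fin (d + 1), x j = 1 :=
      fun j => (hmemc j x).mp (Set.mem_iInter.mp hx j.castSucc)
    have h2 : ∑ j, x j = (d : ZMod p) + 2 :=
      (hmeml x).mp (Set.mem_iInter.mp hx (Fin.last (d + 1)))
    rw [Finset.sum_congr rfl (fun j _ => h1 j)] at h2
    simp only [Finset.sum_const, Finset.card_univ, Fintype.card_fin, nsmul_eq_mul,
      mul_one] at h2
    push_cast at h2
    have h01 : (0 : ZMod p) = 1 := by linear_combination h2
    exact one_ne_zero h01.symm
  · -- any subfamily of at most `d` cosets has a common point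
    intro s hs
    have hne : ∃ i₀ : Fin (d + 2), i₀ ∉ s := by
      by_contra h
      push_neg at h
      have : s = Finset.univ := Finset.eq_univ_iff_forall.mpr h
      rw [this, Finset.card_univ, Fintype.card_fin] at hs
      omega
    obtain ⟨i₀, hi₀⟩ := hne
    suffices h : ∃ x : Fin (d + 1) → ZMod p, ∀ i ∈ s, x ∈ A i by
      obtain ⟨x, hx⟩ := h
      exact ⟨φ x, Set.mem_iInter₂.mpr fun i hi => Set.mem_image_of_mem φ (hx i hi)⟩
    rcases eq_or_ne i₀ (Fin.last (d + 1)) with h | h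
    · -- drop the sum condition: the all-ones vector works
      refine ⟨fun _ => 1, ?_⟩
      intro i hi
      have hil : i ≠ Fin.last (d + 1) := by
        rintro rfl
        rw [h] at hi₀
        exact hi₀ hi
      obtain ⟨j, rfl⟩ : ∃ j : Fin (d + 1), i = j.castSucc :=
        ⟨i.castPred hil, (Fin.castSucc_castPred i hil).symm⟩
      exact (hmemc j _).mpr rfl
    · -- drop one coordinate condition
      obtain ⟨j₀, rfl⟩ : ∃ j : Fin (d + 1), i₀ = j.castSucc :=
        ⟨i₀.castPred h, (Fin.castSucc_castPred i₀ h).symm⟩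
      refine ⟨(fun _ => 1) + Pi.single j₀ 1, ?_⟩
      intro i hi
      refine Fin.lastCases ?_ ?_ i hi
      · -- the sum condition holds
        intro _
        refine (hmeml _).mpr ?_
        simp only [Pi.add_apply]
        rw [Finset.sum_add_distrib]
        simp only [Finset.sum_const, Finset.card_univ, Fintype.card_fin, nsmul_eq_mul,
          mul_one, Finset.sum_pi_single', Finset.mem_univ, if_true]
        push_cast
        ring
      · intro j hj
        have hjj : j ≠ j₀ := by
          rintro rfl
          exact hi₀ hj
        refine (hmemc j _).mpr ?_
        simp [Pi.single_eq_of_ne hjj]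

/-- Let `k` be an infinite field of characteristic `p > 0` and let `d` be any
natural number.  Then there are finitely many cosets of finite additive
subgroups of `(k, +)` with empty total intersection such that any `d` of them
have nonempty intersection.  Consequently, the additive group of `k` has no
finite Helly dimension: `κ(k, +) = ∞`. -/
theorem addHellyDim_infinite_of_charP (k : Type*) [Field k] [Infinite k]
    (p : ℕ) (hp : p.Prime) [CharP k p] :
    (∀ d : ℕ, ∃ (m : ℕ) (C : Fin m → Set k),
      (∀ i, ∃ (a : k) (H : AddSubgroup k), (H : Set k).Finite ∧ C i = a +ᵥ (H : Set k)) ∧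
      (⋂ i, C i) = ∅ ∧
      (∀ s : Finset (Fin m), s.card ≤ d → (⋂ i ∈ s, C i).Nonempty)) ∧
    addHellyDim k = ⊤ := by
  refine ⟨exists_coset_system k p hp, ?_⟩
  have hempty : {d : ℕ∞ | ∃ n : ℕ, d = (n : ℕ∞) ∧ IsAddHellyBound k n} = ∅ := by
    rw [Set.eq_empty_iff_forall_notMem]
    rintro d ⟨n, rfl, hbound⟩
    obtain ⟨m, C, hcoset, hEmpty, hnonempty⟩ := exists_coset_system k p hp n
    obtain ⟨s, hs, hsempty⟩ := hbound m C
      (fun i => by obtain ⟨a, H, _, hC⟩ := hcoset i; exact ⟨a, H, hC⟩) hEmpty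
    exact (hnonempty s hs).ne_empty hsempty
  rw [addHellyDim, hempty, sInf_empty]
end

section
/- For each natural number n ≥ 1, let C_n = {x ∈ ℤ : x ≡ Σ_{i=0}^{n-1} 2^{2^i} (mod 2^{2^n})}, a coset of the subgroup 2^{2^n}ℤ of (ℤ, +). Then C_1 ⊇ C_2 ⊇ C_3 ⊇ ⋯ is a descending chain of nonempty cosets (so every finite subfamily of {C_n} has nonempty intersection), yet the intersection ⋂_{n≥1} C_n is empty. -/
private lemma Ssum_nonneg (n : ℕ) : 0 ≤ ∑ i ∈ Finset.range n, (2:ℤ)^(2^i) :=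
  Finset.sum_nonneg fun i _ => by positivity

private lemma two_S_le (n : ℕ) (hn : 1 ≤ n) :
    2 * ∑ i ∈ Finset.range n, (2:ℤ)^(2^i) ≤ 2^(2^n) := by
  induction n, hn using Nat.le_induction with
  | base => norm_num
  | succ n hn ih =>
    rw [Finset.sum_range_succ, mul_add]
    have h2 : (2:ℕ) ≤ 2^n := by
      calc (2:ℕ) = 2^1 := rfl
      _ ≤ 2^n := Nat.pow_le_pow_right (by norm_num) hn
    have h4 : (4:ℤ) ≤ 2^(2^n) := by
      calc (4:ℤ) = 2^2 := by norm_num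
      _ ≤ 2^(2^n) := pow_le_pow_right₀ (by norm_num) h2
    have hpow : (2:ℤ)^(2^(n+1)) = (2^(2^n))^2 := by
      rw [← pow_mul, ← pow_succ]
    rw [hpow]
    nlinarith [ih, h4]

/-- For `n ≥ 1` let `C_n = {x ∈ ℤ : x ≡ ∑_{i=0}^{n-1} 2^{2^i} (mod 2^{2^n})}`,
a coset of the subgroup `2^{2^n} ℤ`.  Then `C_1 ⊇ C_2 ⊇ ⋯` is a descending
chain of nonempty cosets (in particular every finite subfamily has nonempty
intersection), but the intersection of all the `C_n` (for `n ≥ 1`) is empty. -/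
theorem descending_cosets_empty_intersection (C : ℕ → Set ℤ)
    (hC : ∀ n, C n =
      {x : ℤ | (2 : ℤ) ^ (2 ^ n) ∣ x - ∑ i ∈ Finset.range n, (2 : ℤ) ^ (2 ^ i)}) :
    (∀ n, 1 ≤ n → C (n + 1) ⊆ C n) ∧
    (∀ n, 1 ≤ n → (C n).Nonempty) ∧
    (∀ s : Finset ℕ, (∀ n ∈ s, 1 ≤ n) → (⋂ n ∈ s, C n).Nonempty) ∧
    (⋂ n ∈ {n : ℕ | 1 ≤ n}, C n) = ∅ := by
  refine ⟨?_, ?_, ?_, ?_⟩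
  · intro n _ x hx
    rw [hC] at hx ⊢
    simp only [Set.mem_setOf_eq] at hx ⊢
    have h1 : (2:ℤ)^(2^n) ∣ x - ∑ i ∈ Finset.range (n+1), (2:ℤ)^(2^i) :=
      dvd_trans (pow_dvd_pow 2 (Nat.pow_le_pow_right (by norm_num) n.le_succ)) hx
    have h2 : x - ∑ i ∈ Finset.range n, (2:ℤ)^(2^i)
        = (x - ∑ i ∈ Finset.range (n+1), (2:ℤ)^(2^i)) + 2^(2^n) := by
      rw [Finset.sum_range_succ]; ring
    rw [h2]
    exact dvd_add h1 (dvd_refl _)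
  · intro n _
    exact ⟨∑ i ∈ Finset.range n, (2:ℤ)^(2^i), by rw [hC]; simp⟩
  · intro s _
    rcases s.eq_empty_or_nonempty with rfl | hne
    · simp
    · refine ⟨∑ i ∈ Finset.range (s.max' hne), (2:ℤ)^(2^i), ?_⟩
      simp only [Set.mem_iInter]
      intro n hn
      rw [hC]
      simp only [Set.mem_setOf_eq]
      have hnM : n ≤ s.max' hne := Finset.le_max' s n hn
      rw [← Finset.sum_Ico_eq_sub _ hnM]
      exact Finset.dvd_sum fun i hi =>
        pow_dvd_pow 2 (Nat.pow_le_pow_right (by norm_num) (Finset.mem_Ico.mp hi).1)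
  · ext x
    simp only [Set.mem_iInter, Set.mem_empty_iff_false, iff_false, Set.mem_setOf_eq, hC]
    intro hx
    set N := 2 * x.natAbs + 1 with hN
    have h1 : (2:ℤ)^(2^N) ∣ x - ∑ i ∈ Finset.range N, (2:ℤ)^(2^i) := hx N (by omega)
    have h2 : (2:ℤ)^(2^(N+1)) ∣ x - ∑ i ∈ Finset.range (N+1), (2:ℤ)^(2^i) :=
      hx (N+1) (by omega)
    have hsplit : x - ∑ i ∈ Finset.range (N+1), (2:ℤ)^(2^i)
        = (x - ∑ i ∈ Finset.range N, (2:ℤ)^(2^i)) - 2^(2^N) := by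
      rw [Finset.sum_range_succ]; ring
    have hne : x - ∑ i ∈ Finset.range N, (2:ℤ)^(2^i) ≠ 0 := by
      intro h0
      rw [hsplit, h0, zero_sub, dvd_neg] at h2
      have hle : (2:ℤ)^(2^(N+1)) ≤ 2^(2^N) := Int.le_of_dvd (by positivity) h2
      have : (2:ℤ)^(2^N) < 2^(2^(N+1)) := by
        apply pow_lt_pow_right₀ (by norm_num)
        exact Nat.pow_lt_pow_right (by norm_num) (Nat.lt_succ_self N)
      omega
    have habs : (2:ℤ)^(2^N) ≤ |x - ∑ i ∈ Finset.range N, (2:ℤ)^(2^i)| :=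
      Int.le_of_dvd (abs_pos.mpr hne) ((dvd_abs _ _).mpr h1)
    have hSn := Ssum_nonneg N
    have hS2 := two_S_le N (by omega)
    have hxa : |x| ≥ |x - ∑ i ∈ Finset.range N, (2:ℤ)^(2^i)|
        - ∑ i ∈ Finset.range N, (2:ℤ)^(2^i) := by
      have := abs_sub_abs_le_abs_sub x (∑ i ∈ Finset.range N, (2:ℤ)^(2^i))
      have habs2 : |∑ i ∈ Finset.range N, (2:ℤ)^(2^i)| = ∑ i ∈ Finset.range N, (2:ℤ)^(2^i) :=
        abs_of_nonneg hSn
      have h3 := abs_sub_abs_le_abs_sub (x - ∑ i ∈ Finset.range N, (2:ℤ)^(2^i)) (-(∑ i ∈ Finset.range N, (2:ℤ)^(2^i)))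
      simp only [sub_neg_eq_add, sub_add_cancel, abs_neg, habs2] at h3
      linarith
    -- 2|x| ≥ 2*2^{2^N} - 2 S N ≥ 2^{2^N} ≥ N+1 > 2|x|
    have hbig : ((N:ℤ)) < 2^(2^N) := by
      have h1n : (N:ℕ) < 2^N := Nat.lt_two_pow_self (n := N)
      have h2n : (2:ℕ)^N ≤ 2^(2^N) := Nat.pow_le_pow_right (by norm_num) (Nat.le_of_lt (Nat.lt_two_pow_self (n := N)))
      exact_mod_cast lt_of_lt_of_le h1n h2n
    have hxabs : |x| = (x.natAbs : ℤ) := Int.abs_eq_natAbs x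
    omega
end

section
/- Let N be a group with an abelian normal subgroup T of finite index, and set q = [N : T]. Assume that every element of T is a q-th power of an element of T, and that the subgroup E = {u ∈ T : u^q = 1} is finite. Then N contains a finite subgroup H such that N = H·T, i.e. every element of N can be written as h·t with h ∈ H and t ∈ T. -/
/-- Let `N` be a group with an abelian normal subgroup `T` of finite index
`q = [N : T]`.  Assume every element of `T` is a `q`-th power in `T` and the
subgroup `E = {u ∈ T : u^q = 1}` is finite.  Then `N` contains a finite
subgroup `H` with `N = H · T`. -/
theorem finite_complement_of_divisible (N : Type*) [Group N]
    (T : Subgroup N) [T.Normal]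
    (hcomm : ∀ x y : T, x * y = y * x)
    (q : ℕ) (hq : q = T.index) (hqpos : 0 < q)
    (hdiv : ∀ t : T, ∃ s : T, s ^ q = t)
    (hE : {u : T | u ^ q = 1}.Finite) :
    ∃ H : Subgroup N, (H : Set N).Finite ∧
      ∀ g : N, ∃ h ∈ H, ∃ t ∈ T, g = h * t := by
  classical
  haveI hfi : T.FiniteIndex := ⟨by omega⟩
  haveI : Finite (N ⧸ T) := inferInstance
  haveI : Fintype (N ⧸ T) := Fintype.ofFinite _
  letI : CommGroup T := { (inferInstance : Group T) with mul_comm := hcomm }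
  have hcard : Fintype.card (N ⧸ T) = q := by
    rw [hq]; rw [show T.index = Nat.card (N ⧸ T) from rfl, Nat.card_eq_fintype_card]
  set σ : N ⧸ T → N := fun x => x.out with hσdef
  have hmkσ : ∀ x : N ⧸ T, ((σ x : N) : N ⧸ T) = x := fun x => x.out_eq
  have hmem : ∀ g : N, g ∈ T ↔ (g : N ⧸ T) = 1 := fun g => (QuotientGroup.eq_one_iff g).symm
  -- the conjugation action of N on T
  let conjT : N → T →* T := fun g =>
    { toFun := fun t => ⟨g * t * g⁻¹, Subgroup.Normal.conj_mem ‹T.Normal› t t.2 g⟩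
      map_one' := by ext; simp
      map_mul' := fun t u => by ext; push_cast; group }
  have hconjT : ∀ (g : N) (t : T), ((conjT g t : T) : N) = g * t * g⁻¹ := fun g t => rfl
  -- the 2-cocycle
  have hcmem : ∀ x y : N ⧸ T, σ x * σ y * (σ (x * y))⁻¹ ∈ T := by
    intro x y
    rw [hmem]
    show ((σ x : N) : N ⧸ T) * (σ y : N) * ((σ (x*y) : N) : N ⧸ T)⁻¹ = 1
    rw [hmkσ, hmkσ, hmkσ]; group
  let c : N ⧸ T → N ⧸ T → T := fun x y => ⟨σ x * σ y * (σ (x * y))⁻¹, hcmem x y⟩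
  have hc : ∀ x y, ((c x y : T) : N) = σ x * σ y * (σ (x * y))⁻¹ := fun _ _ => rfl
  have hcocycle : ∀ x y z, c x y * c (x * y) z = conjT (σ x) (c y z) * c x (y * z) := by
    intro x y z
    ext
    push_cast [hc, hconjT]
    rw [mul_assoc x y z]
    group
  let b : N ⧸ T → T := fun x => ∏ y, c x y
  have hb : ∀ x y, c x y ^ q = conjT (σ x) (b y) * (b x * (b (x * y))⁻¹) := by
    intro x y
    have h1 : ∏ z, (c x y * c (x * y) z) = c x y ^ q * b (x * y) := by
      rw [Finset.prod_mul_distrib, Finset.prod_const, Finset.card_univ, hcard]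
    have h2 : ∏ z, (conjT (σ x) (c y z) * c x (y * z)) = conjT (σ x) (b y) * b x := by
      rw [Finset.prod_mul_distrib, ← map_prod]
      congr 1
      exact Fintype.prod_equiv (Equiv.mulLeft y) _ _ (fun z => rfl)
    have key : c x y ^ q * b (x * y) = conjT (σ x) (b y) * b x := by
      rw [← h1, ← h2]
      exact Finset.prod_congr rfl (fun z _ => hcocycle x y z)
    have := eq_mul_inv_of_mul_eq key
    rw [this]; group
  -- take q-th roots
  let a : N ⧸ T → T := fun x => (hdiv (b x)).choose
  have ha : ∀ x, a x ^ q = b x := fun x => (hdiv (b x)).choose_spec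
  -- the corrected section
  set τ : N ⧸ T → N := fun x => ((a x)⁻¹ : T) * σ x with hτdef
  have hmkτ : ∀ x : N ⧸ T, ((τ x : N) : N ⧸ T) = x := by
    intro x
    have h1 : ((τ x : N) : N ⧸ T) = ((((a x)⁻¹ : T) : N) : N ⧸ T) * ((σ x : N) : N ⧸ T) := rfl
    rw [h1, (hmem _).mp ((a x)⁻¹).2, one_mul, hmkσ]
  have hc'mem : ∀ x y : N ⧸ T, τ x * τ y * (τ (x * y))⁻¹ ∈ T := by
    intro x y
    rw [hmem]
    show ((τ x : N) : N ⧸ T) * (τ y : N) * ((τ (x*y) : N) : N ⧸ T)⁻¹ = 1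
    rw [hmkτ, hmkτ, hmkτ]; group
  let c' : N ⧸ T → N ⧸ T → T := fun x y => ⟨τ x * τ y * (τ (x * y))⁻¹, hc'mem x y⟩
  have hc' : ∀ x y, ((c' x y : T) : N) = τ x * τ y * (τ (x * y))⁻¹ := fun _ _ => rfl
  have hc'formula : ∀ x y, c' x y = (a x)⁻¹ * (conjT (σ x) (a y))⁻¹ * c x y * a (x * y) := by
    intro x y
    ext
    push_cast [hc', hc, hconjT, hτdef]
    group
  have hq1 : ∀ x y, c' x y ^ q = 1 := by
    intro x y
    rw [hc'formula, mul_pow, mul_pow, mul_pow, inv_pow, inv_pow, ha, ← map_pow, ha, hb, ha]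
    group
  -- the finite subgroup E = T[q]
  let E : Subgroup N :=
    { carrier := {u | u ∈ T ∧ u ^ q = 1}
      one_mem' := ⟨T.one_mem, one_pow q⟩
      mul_mem' := by
        rintro u v ⟨hu, hu'⟩ ⟨hv, hv'⟩
        refine ⟨T.mul_mem hu hv, ?_⟩
        have hcom : u * v = v * u := congrArg Subtype.val (hcomm ⟨u, hu⟩ ⟨v, hv⟩)
        rw [(Commute.mul_pow hcom q : (u*v)^q = u^q * v^q), hu', hv', one_mul]
      inv_mem' := by
        rintro u ⟨hu, hu'⟩
        exact ⟨T.inv_mem hu, by rw [inv_pow, hu', inv_one]⟩ }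
  have hEmem : ∀ u : N, u ∈ E ↔ u ∈ T ∧ u ^ q = 1 := fun u => Iff.rfl
  have hEfin : (E : Set N).Finite := by
    have hsub : (E : Set N) ⊆ Subtype.val '' {u : T | u ^ q = 1} := by
      rintro u ⟨hu, hu'⟩
      exact ⟨⟨u, hu⟩, by ext; push_cast; exact hu', rfl⟩
    exact (hE.image _).subset hsub
  have hEconj : ∀ (g u : N), u ∈ E → g * u * g⁻¹ ∈ E := by
    rintro g u ⟨hu, hu'⟩
    exact ⟨Subgroup.Normal.conj_mem ‹T.Normal› u hu g, by rw [conj_pow, hu']; group⟩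
  have hc'E : ∀ x y, ((c' x y : T) : N) ∈ E := by
    intro x y
    refine ⟨(c' x y).2, ?_⟩
    have : (((c' x y ^ q : T) : N)) = ((c' x y : T) : N) ^ q := by push_cast; ring_nf
    rw [← this, hq1]; rfl
  have hττ : ∀ x y, τ x * τ y = ((c' x y : T) : N) * τ (x * y) := by
    intro x y; rw [hc']; group
  have hτ1E : τ 1 ∈ E := by
    have h11 : ((c' 1 1 : T) : N) = τ 1 := by rw [hc', one_mul]; group
    rw [← h11]; exact hc'E 1 1
  have hτinv : ∀ x, (τ x)⁻¹ = τ x⁻¹ * ((τ 1)⁻¹ * ((c' x x⁻¹ : T) : N)⁻¹) := by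
    intro x
    have h := hττ x x⁻¹
    rw [mul_inv_cancel x] at h
    have h2 : τ x⁻¹ = (τ x)⁻¹ * (((c' x x⁻¹ : T) : N) * τ 1) := by rw [← h]; group
    rw [h2]; group
  -- the finite complement H
  let H : Subgroup N :=
    { carrier := {g | ∃ e ∈ E, ∃ x, g = e * τ x}
      one_mem' := ⟨(τ 1)⁻¹, E.inv_mem hτ1E, 1, (inv_mul_cancel _).symm⟩
      mul_mem' := by
        rintro g₁ g₂ ⟨e, he, x, rfl⟩ ⟨f, hf, y, rfl⟩
        refine ⟨e * (τ x * f * (τ x)⁻¹) * ((c' x y : T) : N),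
          E.mul_mem (E.mul_mem he (hEconj _ _ hf)) (hc'E x y), x * y, ?_⟩
        rw [show e * τ x * (f * τ y) = e * (τ x * f * (τ x)⁻¹) * (τ x * τ y) by group, hττ x y]
        group
      inv_mem' := by
        rintro g ⟨e, he, x, rfl⟩
        refine ⟨τ x⁻¹ * ((τ 1)⁻¹ * ((c' x x⁻¹ : T) : N)⁻¹ * e⁻¹) * (τ x⁻¹)⁻¹,
          hEconj _ _ (E.mul_mem (E.mul_mem (E.inv_mem hτ1E) (E.inv_mem (hc'E x x⁻¹)))
            (E.inv_mem he)), x⁻¹, ?_⟩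
        rw [mul_inv_rev, hτinv x]
        group }
  refine ⟨H, ?_, ?_⟩
  · have hsub : (H : Set N) ⊆ (fun p : N × (N ⧸ T) => p.1 * τ p.2) '' ((E : Set N) ×ˢ Set.univ) := by
      rintro g ⟨e, he, x, rfl⟩
      exact ⟨(e, x), ⟨he, Set.mem_univ x⟩, rfl⟩
    exact ((hEfin.prod Set.finite_univ).image _).subset hsub
  · intro g
    refine ⟨τ (g : N ⧸ T), ⟨1, E.one_mem, (g : N ⧸ T), (one_mul _).symm⟩,
      (τ (g : N ⧸ T))⁻¹ * g, ?_, by group⟩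
    rw [hmem]
    show ((τ (g : N ⧸ T) : N) : N ⧸ T)⁻¹ * (g : N ⧸ T) = 1
    rw [hmkτ]; group
end

section
/- In the additive topological group (ℝ, +) with its usual topology, let C_1, …, C_m be finitely many closed cosets (translates of closed additive subgroups of ℝ). If every subfamily of at most 3 of the cosets C_1, …, C_m has nonempty intersection, then the whole family has nonempty intersection: ⋂_{i=1}^m C_i ≠ ∅. In other words, κ(ℝ) ≤ 3. -/
open Pointwise

lemma my_gcd_lcm_dvd (k b c : ℕ) (hk : k ≠ 0) (hb : b ≠ 0) (hc : c ≠ 0) :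
    Nat.gcd k (Nat.lcm b c) ∣ Nat.lcm (Nat.gcd k b) (Nat.gcd k c) := by
  have hgb : Nat.gcd k b ≠ 0 := fun h => hk (Nat.gcd_eq_zero_iff.mp h).1
  have hgc : Nat.gcd k c ≠ 0 := fun h => hk (Nat.gcd_eq_zero_iff.mp h).1
  have hbc : Nat.lcm b c ≠ 0 := Nat.lcm_ne_zero hb hc
  have h1 : Nat.gcd k (Nat.lcm b c) ≠ 0 := fun h => hk (Nat.gcd_eq_zero_iff.mp h).1
  have h2 : Nat.lcm (Nat.gcd k b) (Nat.gcd k c) ≠ 0 := Nat.lcm_ne_zero hgb hgc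
  rw [← Nat.factorization_le_iff_dvd h1 h2, Nat.factorization_gcd hk hbc,
    Nat.factorization_lcm hb hc, Nat.factorization_lcm hgb hgc,
    Nat.factorization_gcd hk hb, Nat.factorization_gcd hk hc]
  intro p
  simp only [Finsupp.inf_apply, Finsupp.sup_apply]
  exact le_of_eq (inf_sup_left _ _ _)

lemma my_lcm_ne_zero {ι : Type*} (s : Finset ι) (N : ι → ℕ)
    (hN : ∀ i ∈ s, N i ≠ 0) : s.lcm N ≠ 0 := by
  classical
  induction s using Finset.induction_on with
  | empty => simp
  | @insert a s' ha ih =>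
    rw [Finset.lcm_insert, lcm_eq_nat_lcm]
    exact Nat.lcm_ne_zero (hN a (Finset.mem_insert_self a s'))
      (ih fun i hi => hN i (Finset.mem_insert_of_mem hi))

lemma my_gcd_finset_lcm {ι : Type*} (s : Finset ι) (N : ι → ℕ) (k : ℕ) (hk : k ≠ 0)
    (hN : ∀ i ∈ s, N i ≠ 0) :
    Nat.gcd k (s.lcm N) ∣ s.lcm (fun i => Nat.gcd k (N i)) := by
  classical
  induction s using Finset.induction_on with
  | empty => simp
  | @insert a s' ha ih =>
    have hN' : ∀ i ∈ s', N i ≠ 0 := fun i hi => hN i (Finset.mem_insert_of_mem hi)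
    rw [Finset.lcm_insert, lcm_eq_nat_lcm]
    refine (my_gcd_lcm_dvd k (N a) (s'.lcm N) hk (hN a (Finset.mem_insert_self a s'))
      (my_lcm_ne_zero s' N hN')).trans (Nat.lcm_dvd ?_ ?_)
    · rw [Finset.lcm_insert, lcm_eq_nat_lcm]
      exact Nat.dvd_lcm_left _ _
    · refine (ih hN').trans ?_
      rw [Finset.lcm_insert, lcm_eq_nat_lcm]
      exact Nat.dvd_lcm_right _ _

lemma my_pair_crt (p q : ℕ) (a b : ℤ) (h : (Nat.gcd p q : ℤ) ∣ a - b) :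
    ∃ x : ℤ, (p : ℤ) ∣ x - a ∧ (q : ℤ) ∣ x - b := by
  obtain ⟨k, hk⟩ := h
  refine ⟨a - p * Nat.gcdA p q * k, ⟨-(Nat.gcdA p q * k), by ring⟩, ⟨Nat.gcdB p q * k, ?_⟩⟩
  have hg := Nat.gcd_eq_gcd_ab p q
  have : a - b = ((p : ℤ) * Nat.gcdA p q + (q : ℤ) * Nat.gcdB p q) * k := by
    rw [← hg]; exact hk
  linarith [this]

/-- Pairwise-compatible congruences over `ℤ` have a common solution. -/
lemma my_crt {ι : Type*} (s : Finset ι) (n : ι → ℤ) (c : ι → ℤ)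
    (hn : ∀ i ∈ s, n i ≠ 0)
    (h : ∀ i ∈ s, ∀ j ∈ s, ((Int.gcd (n i) (n j) : ℤ)) ∣ c i - c j) :
    ∃ x : ℤ, ∀ i ∈ s, n i ∣ x - c i := by
  classical
  induction s using Finset.induction_on with
  | empty => exact ⟨0, by simp⟩
  | @insert a s' ha ih =>
    have hmem : ∀ i ∈ s', i ∈ insert a s' := fun i hi => Finset.mem_insert_of_mem hi
    obtain ⟨y, hy⟩ := ih (fun i hi => hn i (hmem i hi))
      (fun i hi j hj => h i (hmem i hi) j (hmem j hj))
    set N : ι → ℕ := fun i => (n i).natAbs with hNdef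
    have hN : ∀ i ∈ s', N i ≠ 0 := fun i hi => Int.natAbs_ne_zero.mpr (hn i (hmem i hi))
    have hka : N a ≠ 0 := Int.natAbs_ne_zero.mpr (hn a (Finset.mem_insert_self a s'))
    set L : ℕ := s'.lcm N with hLdef
    have key : (Nat.gcd (N a) L : ℤ) ∣ c a - y := by
      have h1 : Nat.gcd (N a) L ∣ s'.lcm (fun i => Nat.gcd (N a) (N i)) :=
        my_gcd_finset_lcm s' N (N a) hka hN
      have h3 : s'.lcm (fun i => Nat.gcd (N a) (N i)) ∣ (c a - y).natAbs := by
        apply Finset.lcm_dvd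
        intro i hi
        have d1 : (Nat.gcd (N a) (N i) : ℤ) ∣ c a - c i :=
          h a (Finset.mem_insert_self a s') i (hmem i hi)
        have h5 : ((n i).natAbs : ℤ) ∣ n i := Int.natAbs_dvd.mpr dvd_rfl
        have h4 : (Nat.gcd (N a) (N i) : ℤ) ∣ n i :=
          (Int.natCast_dvd_natCast.mpr (Nat.gcd_dvd_right _ _)).trans h5
        have d2 : (Nat.gcd (N a) (N i) : ℤ) ∣ c i - y := by
          have := dvd_neg.mpr (h4.trans (hy i hi))
          rwa [neg_sub] at this
        have d3 : (Nat.gcd (N a) (N i) : ℤ) ∣ c a - y := by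
          have := dvd_add d1 d2; simpa using this
        rw [← Int.natAbs_natCast (Nat.gcd (N a) (N i))]
        exact Int.natAbs_dvd_natAbs.mpr d3
      have h6 : Nat.gcd (N a) L ∣ (c a - y).natAbs := h1.trans h3
      exact Int.dvd_natAbs.mp (Int.natCast_dvd_natCast.mpr h6)
    obtain ⟨x, hx1, hx2⟩ := my_pair_crt (N a) L (c a) y key
    refine ⟨x, fun i hi => ?_⟩
    rcases Finset.mem_insert.mp hi with rfl | hi'
    · exact Int.natAbs_dvd.mp hx1
    · have hL : (n i) ∣ (L : ℤ) :=
        (Int.dvd_natAbs.mpr dvd_rfl).trans (Int.natCast_dvd_natCast.mpr (Finset.dvd_lcm hi'))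
      have h7 : n i ∣ x - y := hL.trans hx2
      have := dvd_add h7 (hy i hi')
      simpa using this

lemma my_rep (C : Set ℝ)
    (h : ∃ (a : ℝ) (H : AddSubgroup ℝ), IsClosed (H : Set ℝ) ∧ C = a +ᵥ (H : Set ℝ)) :
    C = Set.univ ∨ ∃ a g : ℝ, C = {x | ∃ n : ℤ, x = a + g * n} := by
  obtain ⟨a, H, hcl, hC⟩ := h
  rcases AddSubgroup.dense_or_cyclic H with hd | ⟨g, hg⟩
  · left
    have hH : (H : Set ℝ) = Set.univ := by
      rw [← hcl.closure_eq]
      exact hd.closure_eq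
    rw [hC, hH, Set.vadd_set_univ]
  · right
    refine ⟨a, g, ?_⟩
    have hH : ∀ x : ℝ, x ∈ H ↔ ∃ n : ℤ, n • g = x := by
      intro x
      rw [hg, ← AddSubgroup.zmultiples_eq_closure]
      exact AddSubgroup.mem_zmultiples_iff
    ext x
    simp only [hC, Set.mem_vadd_set_iff_neg_vadd_mem, Set.mem_setOf_eq, vadd_eq_add]
    rw [SetLike.mem_coe, hH]
    constructor
    · rintro ⟨n, hn⟩
      refine ⟨n, ?_⟩
      rw [zsmul_eq_mul] at hn
      linarith [hn]
    · rintro ⟨n, hn⟩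
      refine ⟨n, ?_⟩
      rw [zsmul_eq_mul]
      linarith [hn]

/-- Let `C_1, …, C_m` be closed cosets in the additive topological group
`(ℝ, +)` (translates of closed additive subgroups of `ℝ`).  If every subfamily
of at most `3` of the cosets has nonempty intersection, then the whole family
has nonempty intersection.  In other words, `κ(ℝ) ≤ 3`. -/
theorem real_helly_three (m : ℕ) (C : Fin m → Set ℝ)
    (hcoset : ∀ i, ∃ (a : ℝ) (H : AddSubgroup ℝ),
      IsClosed (H : Set ℝ) ∧ C i = a +ᵥ (H : Set ℝ))
    (h3 : ∀ s : Finset (Fin m), s.card ≤ 3 → (⋂ i ∈ s, C i).Nonempty) :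
    (⋂ i, C i).Nonempty := by
  classical
  have hrep : ∀ i, C i = Set.univ ∨ ∃ a g : ℝ, C i = {x | ∃ n : ℤ, x = a + g * n} :=
    fun i => my_rep (C i) (hcoset i)
  by_cases hsing : ∃ (p : ℝ) (i j : Fin m), C i ∩ C j = {p}
  · -- two cosets meet in a single point: that point is in everything
    obtain ⟨p, i, j, hp⟩ := hsing
    refine ⟨p, Set.mem_iInter.2 fun k => ?_⟩
    obtain ⟨x, hx⟩ := h3 {i, j, k} (by
      refine le_trans (Finset.card_insert_le _ _) (Nat.succ_le_succ ?_)
      refine le_trans (Finset.card_insert_le _ _) (Nat.succ_le_succ ?_)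
      simp)
    rw [Set.mem_iInter₂] at hx
    have hxi := hx i (by simp)
    have hxj := hx j (by simp)
    have hxk := hx k (by simp)
    have hmem : x ∈ C i ∩ C j := ⟨hxi, hxj⟩
    rw [hp, Set.mem_singleton_iff] at hmem
    rwa [← hmem]
  · push_neg at hsing
    have hpair : ∀ i j : Fin m, ∃ x, x ∈ C i ∧ x ∈ C j := by
      intro i j
      obtain ⟨x, hx⟩ := h3 {i, j} (le_trans (Finset.card_insert_le _ _) (by simp))
      rw [Set.mem_iInter₂] at hx
      exact ⟨x, hx i (by simp), hx j (by simp)⟩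
    have htwo : ∀ i j : Fin m, ∃ p q : ℝ,
        (p ∈ C i ∧ p ∈ C j) ∧ (q ∈ C i ∧ q ∈ C j) ∧ p ≠ q := by
      intro i j
      obtain ⟨p, hp⟩ := hpair i j
      rcases em (∃ q, (q ∈ C i ∧ q ∈ C j) ∧ q ≠ p) with ⟨q, hq, hqp⟩ | hno
      · exact ⟨p, q, hp, hq, (Ne.symm hqp)⟩
      · exfalso
        apply hsing p i j
        push_neg at hno
        apply Set.eq_singleton_iff_unique_mem.mpr
        exact ⟨⟨hp.1, hp.2⟩, fun q hq => hno q ⟨hq.1, hq.2⟩⟩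
    have hag : ∀ i, ∃ a g : ℝ, C i = Set.univ ∨ C i = {x | ∃ n : ℤ, x = a + g * n} := by
      intro i
      rcases hrep i with h | ⟨a, g, h⟩
      exacts [⟨0, 0, Or.inl h⟩, ⟨a, g, Or.inr h⟩]
    choose a g hag using hag
    by_cases hall : ∀ i, C i = Set.univ
    · exact ⟨0, Set.mem_iInter.2 fun i => by rw [hall i]; trivial⟩
    push_neg at hall
    obtain ⟨i₀, hi₀⟩ := hall
    have hCi : ∀ i, C i ≠ Set.univ → C i = {x | ∃ n : ℤ, x = a i + g i * n} :=
      fun i hi => (hag i).resolve_left hi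
    have hgne : ∀ i, C i ≠ Set.univ → g i ≠ 0 := by
      intro i hi hg0
      obtain ⟨p, q, hp, hq, hpq⟩ := htwo i i
      rw [hCi i hi] at hp hq
      obtain ⟨np, hnp⟩ := hp.1
      obtain ⟨nq, hnq⟩ := hq.1
      apply hpq
      rw [hnp, hnq, hg0]
      ring
    have hβ : g i₀ ≠ 0 := hgne i₀ hi₀
    -- commensurability
    have hstex : ∀ i, ∃ sa ta : ℤ, sa ≠ 0 ∧
        (C i = Set.univ ∨ g i * sa = g i₀ * ta) := by
      intro i
      by_cases hi : C i = Set.univ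
      · exact ⟨1, 0, one_ne_zero, Or.inl hi⟩
      obtain ⟨p, q, hp, hq, hpq⟩ := htwo i i₀
      rw [hCi i hi, hCi i₀ hi₀] at hp hq
      obtain ⟨⟨n1, e1⟩, ⟨k1, f1⟩⟩ := hp
      obtain ⟨⟨n2, e2⟩, ⟨k2, f2⟩⟩ := hq
      refine ⟨n1 - n2, k1 - k2, ?_, Or.inr ?_⟩
      · intro h0
        apply hpq
        have : (n1 : ℝ) = n2 := by exact_mod_cast congrArg (Int.cast : ℤ → ℝ) (sub_eq_zero.mp h0)
        rw [e1, e2, this]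
      · push_cast
        linear_combination e2 - e1 + f1 - f2
    choose sa ta hst using hstex
    set S : ℤ := ∏ i, sa i with hSdef
    have hS : S ≠ 0 := Finset.prod_ne_zero_iff.mpr (fun i _ => (hst i).1)
    have hSR : (S : ℝ) ≠ 0 := Int.cast_ne_zero.mpr hS
    set γ : ℝ := g i₀ / (S : ℝ) with hγdef
    have hγ : γ ≠ 0 := div_ne_zero hβ hSR
    have hβγ : g i₀ = γ * S := by rw [hγdef, div_mul_cancel₀ _ hSR]
    set n : Fin m → ℤ := fun i => ta i * (S / sa i) with hndef
    have hgn : ∀ i, C i ≠ Set.univ → (n i ≠ 0 ∧ g i = γ * n i) := by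
      intro i hi
      have hdv : sa i ∣ S := Finset.dvd_prod_of_mem sa (Finset.mem_univ i)
      obtain ⟨u, hu⟩ := hdv
      have hsdiv : S / sa i = u := by rw [hu]; exact Int.mul_ediv_cancel_left u (hst i).1
      have hu0 : u ≠ 0 := fun h0 => hS (by rw [hu, h0, mul_zero])
      have heq : g i * sa i = g i₀ * ta i := (hst i).2.resolve_left hi
      have hsiR : ((sa i : ℤ) : ℝ) ≠ 0 := Int.cast_ne_zero.mpr (hst i).1
      have ht0 : ta i ≠ 0 := by
        intro h0
        apply hgne i hi
        rw [h0] at heq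
        push_cast at heq
        have : g i * (sa i : ℝ) = 0 := by linarith [heq]
        rcases mul_eq_zero.mp this with h | h
        · exact h
        · exact absurd h hsiR
      constructor
      · simp only [hndef, hsdiv]
        exact mul_ne_zero ht0 hu0
      · have key : (γ * n i) * sa i = g i * sa i := by
          rw [hndef]
          simp only [hsdiv]
          rw [heq, hβγ]
          have huR : (S : ℝ) = (sa i : ℝ) * (u : ℝ) := by exact_mod_cast congrArg (Int.cast : ℤ → ℝ) hu
          push_cast
          rw [huR]
          ring
        exact (mul_right_cancel₀ hsiR key).symm
    have hzex : ∀ i, ∃ z : ℤ, C i = Set.univ ∨ a i - a i₀ = γ * z := by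
      intro i
      by_cases hi : C i = Set.univ
      · exact ⟨0, Or.inl hi⟩
      obtain ⟨p, hp1, hp2⟩ := hpair i i₀
      rw [hCi i hi] at hp1
      rw [hCi i₀ hi₀] at hp2
      obtain ⟨np, e1⟩ := hp1
      obtain ⟨kp, f1⟩ := hp2
      refine ⟨S * kp - n i * np, Or.inr ?_⟩
      have hgni := (hgn i hi).2
      push_cast
      linear_combination f1 - e1 + (kp : ℝ) * hβγ - (np : ℝ) * hgni
    choose z hzp using hzex
    set J : Finset (Fin m) := Finset.univ.filter (fun i => C i ≠ Set.univ) with hJdef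
    have hJmem : ∀ i, i ∈ J ↔ C i ≠ Set.univ := by
      intro i; simp [hJdef]
    obtain ⟨x, hx⟩ := my_crt J n z
      (fun i hi => (hgn i ((hJmem i).mp hi)).1)
      (by
        intro i hi j hj
        have hi' := (hJmem i).mp hi
        have hj' := (hJmem j).mp hj
        obtain ⟨p, hp1, hp2⟩ := hpair i j
        rw [hCi i hi'] at hp1
        rw [hCi j hj'] at hp2
        obtain ⟨np, e1⟩ := hp1
        obtain ⟨kp, f1⟩ := hp2
        have hzi := (hzp i).resolve_left hi'
        have hzj := (hzp j).resolve_left hj'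
        have hgni := (hgn i hi').2
        have hgnj := (hgn j hj').2
        have h1 : γ * ((z i : ℝ) - z j) = γ * ((n j : ℝ) * kp - (n i : ℝ) * np) := by
          linear_combination hzj - hzi + f1 - e1 + (kp : ℝ) * hgnj - (np : ℝ) * hgni
        have h2 : z i - z j = n j * kp - n i * np := by
          have h2' := mul_left_cancel₀ hγ h1
          exact_mod_cast h2'
        rw [h2]
        exact dvd_sub (Dvd.dvd.mul_right (Int.gcd_dvd_right _ _) kp) (Dvd.dvd.mul_right (Int.gcd_dvd_left _ _) np))
    refine ⟨a i₀ + γ * x, Set.mem_iInter.2 fun i => ?_⟩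
    by_cases hi : C i = Set.univ
    · rw [hi]; trivial
    · rw [hCi i hi]
      obtain ⟨d, hd⟩ := hx i ((hJmem i).mpr hi)
      refine ⟨d, ?_⟩
      have hzi := (hzp i).resolve_left hi
      have hgni := (hgn i hi).2
      have hxr : (x : ℝ) - (z i : ℝ) = (n i : ℝ) * d := by exact_mod_cast congrArg (Int.cast : ℤ → ℝ) hd
      linear_combination (-1 : ℝ) * hzi + γ * hxr - (d : ℝ) * hgni
end

section
/- Consider in the additive group (ℝ, +) the three closed cosets C_1 = ℤ, C_2 = {n√2 : n ∈ ℤ}, and C_3 = {1 + n(√2 − 1) : n ∈ ℤ}. Then C_1 ∩ C_2 = {0}, C_1 ∩ C_3 = {1}, C_2 ∩ C_3 = {√2}, and C_1 ∩ C_2 ∩ C_3 = ∅. In particular, any two of these cosets intersect but all three have empty intersection, so κ(ℝ) ≥ 3. -/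
open Pointwise

/-- `C` is a closed coset in the additive topological group `G`, i.e. a set of
the form `a + H` for some closed additive subgroup `H` of `G`. -/
def IsClosedAddCoset {G : Type*} [AddGroup G] [TopologicalSpace G] (C : Set G) : Prop :=
  ∃ (a : G) (H : AddSubgroup G), IsClosed (H : Set G) ∧ C = a +ᵥ (H : Set G)

/-- `d` is a Helly bound for the additive topological group `G`: every finite
system of closed cosets of `G` with empty intersection contains a subsystem of
at most `d` cosets with empty intersection. -/
def IsClosedAddHellyBound (G : Type*) [AddGroup G] [TopologicalSpace G] (d : ℕ) : Prop :=
  ∀ (m : ℕ) (C : Fin m → Set G), (∀ i, IsClosedAddCoset (C i)) → (⋂ i, C i) = ∅ →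
    ∃ s : Finset (Fin m), s.card ≤ d ∧ (⋂ i ∈ s, C i) = ∅

/-- The Helly dimension `κ(G)` of an additive topological group `G`. -/
noncomputable def topAddHellyDim (G : Type*) [AddGroup G] [TopologicalSpace G] : ℕ∞ :=
  sInf {d : ℕ∞ | ∃ n : ℕ, d = (n : ℕ∞) ∧ IsClosedAddHellyBound G n}

lemma key_sqrt2 (m n : ℤ) (h : (m : ℝ) = n * Real.sqrt 2) : m = 0 ∧ n = 0 := by
  have hn : n = 0 := by
    by_contra hn
    have hirr : Irrational (Real.sqrt 2) := irrational_sqrt_two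
    have h2 : Real.sqrt 2 = (m : ℝ) / (n : ℝ) := by
      field_simp at h ⊢
      linarith [h]
    rw [h2] at hirr
    exact (Rat.not_irrational (m / n)) (by push_cast at hirr ⊢; convert hirr using 2)
  refine ⟨?_, hn⟩
  rw [hn] at h; push_cast at h; exact_mod_cast (by linarith : (m:ℝ) = 0)

/-- `zmultiples a` is a closed coset of `ℝ`. -/
lemma isClosedAddCoset_zmultiples_vadd (a b : ℝ) :
    IsClosedAddCoset (b +ᵥ (AddSubgroup.zmultiples a : Set ℝ)) :=
  ⟨b, AddSubgroup.zmultiples a, AddSubgroup.isClosed_of_discrete, rfl⟩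

lemma set_eq_zmultiples_vadd (a b : ℝ) :
    {x : ℝ | ∃ n : ℤ, x = b + (n : ℝ) * a} = b +ᵥ (AddSubgroup.zmultiples a : Set ℝ) := by
  ext x
  simp only [Set.mem_setOf_eq, Set.mem_vadd_set, SetLike.mem_coe,
    AddSubgroup.mem_zmultiples_iff]
  constructor
  · rintro ⟨n, rfl⟩
    exact ⟨(n : ℝ) * a, ⟨n, by push_cast [zsmul_eq_mul]; ring⟩, by simp [vadd_eq_add]⟩
  · rintro ⟨y, ⟨n, rfl⟩, rfl⟩
    exact ⟨n, by push_cast [zsmul_eq_mul, vadd_eq_add]; ring⟩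

/-- The three closed cosets `C_1 = ℤ`, `C_2 = √2·ℤ` and `C_3 = 1 + (√2 − 1)·ℤ`
of `(ℝ, +)` satisfy `C_1 ∩ C_2 = {0}`, `C_1 ∩ C_3 = {1}`, `C_2 ∩ C_3 = {√2}`
and `C_1 ∩ C_2 ∩ C_3 = ∅`; in particular any two of them intersect while all
three have empty intersection, so `κ(ℝ) ≥ 3`. -/
theorem real_helly_lower_bound (C₁ C₂ C₃ : Set ℝ)
    (hC₁ : C₁ = {x : ℝ | ∃ n : ℤ, x = (n : ℝ)})
    (hC₂ : C₂ = {x : ℝ | ∃ n : ℤ, x = (n : ℝ) * Real.sqrt 2})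
    (hC₃ : C₃ = {x : ℝ | ∃ n : ℤ, x = 1 + (n : ℝ) * (Real.sqrt 2 - 1)}) :
    C₁ ∩ C₂ = {0} ∧ C₁ ∩ C₃ = {1} ∧ C₂ ∩ C₃ = {Real.sqrt 2} ∧
    C₁ ∩ C₂ ∩ C₃ = ∅ ∧ 3 ≤ topAddHellyDim ℝ := by
  subst hC₁ hC₂ hC₃
  have h12 : {x : ℝ | ∃ n : ℤ, x = (n : ℝ)} ∩
      {x : ℝ | ∃ n : ℤ, x = (n : ℝ) * Real.sqrt 2} = {0} := by
    ext x
    simp only [Set.mem_inter_iff, Set.mem_setOf_eq, Set.mem_singleton_iff]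
    constructor
    · rintro ⟨⟨m, rfl⟩, ⟨n, h⟩⟩
      obtain ⟨hm, -⟩ := key_sqrt2 m n h
      simp [hm]
    · rintro rfl
      exact ⟨⟨0, by simp⟩, ⟨0, by simp⟩⟩
  have h13 : {x : ℝ | ∃ n : ℤ, x = (n : ℝ)} ∩
      {x : ℝ | ∃ n : ℤ, x = 1 + (n : ℝ) * (Real.sqrt 2 - 1)} = {1} := by
    ext x
    simp only [Set.mem_inter_iff, Set.mem_setOf_eq, Set.mem_singleton_iff]
    constructor
    · rintro ⟨⟨m, rfl⟩, ⟨n, h⟩⟩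
      have h' : ((m - 1 + n : ℤ) : ℝ) = (n : ℝ) * Real.sqrt 2 := by push_cast; linarith [h]
      obtain ⟨-, hn⟩ := key_sqrt2 (m - 1 + n) n h'
      subst hn
      have : (m : ℝ) = 1 := by push_cast at h; linarith
      exact this
    · rintro rfl
      exact ⟨⟨1, by simp⟩, ⟨0, by simp⟩⟩
  have h23 : {x : ℝ | ∃ n : ℤ, x = (n : ℝ) * Real.sqrt 2} ∩
      {x : ℝ | ∃ n : ℤ, x = 1 + (n : ℝ) * (Real.sqrt 2 - 1)} = {Real.sqrt 2} := by
    ext x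
    simp only [Set.mem_inter_iff, Set.mem_setOf_eq, Set.mem_singleton_iff]
    constructor
    · rintro ⟨⟨m, rfl⟩, ⟨n, h⟩⟩
      have h' : ((1 - n : ℤ) : ℝ) = ((m - n : ℤ) : ℝ) * Real.sqrt 2 := by push_cast; linarith [h]
      obtain ⟨h1, h2⟩ := key_sqrt2 (1 - n) (m - n) h'
      have hn : n = 1 := by omega
      have hm : m = 1 := by omega
      rw [hm]; push_cast; ring
    · rintro rfl
      exact ⟨⟨1, by push_cast; ring⟩, ⟨1, by push_cast; ring⟩⟩
  refine ⟨h12, h13, h23, ?_, ?_⟩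
  · rw [Set.inter_assoc, Set.eq_empty_iff_forall_notMem]
    rintro x ⟨h1, h2, h3⟩
    have e0 : x = 0 := by have := Set.mem_inter h1 h2; rw [h12] at this; exact this
    have e1 : x = 1 := by have := Set.mem_inter h1 h3; rw [h13] at this; exact this
    norm_num [e0] at e1
  · -- the Helly dimension bound
    refine le_sInf ?_
    rintro d ⟨n, rfl, hn⟩
    by_contra hlt
    push_neg at hlt
    have hn2 : n ≤ 2 := by exact_mod_cast Order.le_of_lt_add_one (by exact_mod_cast hlt)
    set S₁ : Set ℝ := {x : ℝ | ∃ n : ℤ, x = (n : ℝ)} with hS₁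
    set S₂ : Set ℝ := {x : ℝ | ∃ n : ℤ, x = (n : ℝ) * Real.sqrt 2} with hS₂
    set S₃ : Set ℝ := {x : ℝ | ∃ n : ℤ, x = 1 + (n : ℝ) * (Real.sqrt 2 - 1)} with hS₃
    have hS₁' : S₁ = (0 : ℝ) +ᵥ (AddSubgroup.zmultiples (1:ℝ) : Set ℝ) := by
      rw [hS₁, ← set_eq_zmultiples_vadd]; simp
    have hS₂' : S₂ = (0 : ℝ) +ᵥ (AddSubgroup.zmultiples (Real.sqrt 2) : Set ℝ) := by
      rw [hS₂, ← set_eq_zmultiples_vadd]; simp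
    have hS₃' : S₃ = (1 : ℝ) +ᵥ (AddSubgroup.zmultiples (Real.sqrt 2 - 1) : Set ℝ) := by
      rw [hS₃, ← set_eq_zmultiples_vadd]
    set C : Fin 3 → Set ℝ := ![S₁, S₂, S₃] with hC
    have hcoset : ∀ i, IsClosedAddCoset (C i) := by
      intro i
      fin_cases i
      · simpa [hC, hS₁'] using isClosedAddCoset_zmultiples_vadd 1 0
      · simpa [hC, hS₂'] using isClosedAddCoset_zmultiples_vadd (Real.sqrt 2) 0
      · simpa [hC, hS₃'] using isClosedAddCoset_zmultiples_vadd (Real.sqrt 2 - 1) 1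
    have hempty : (⋂ i, C i) = ∅ := by
      rw [Set.eq_empty_iff_forall_notMem]
      intro x hx
      have h1 : x ∈ S₁ := by simpa [hC] using Set.mem_iInter.1 hx 0
      have h2 : x ∈ S₂ := by simpa [hC] using Set.mem_iInter.1 hx 1
      have h3 : x ∈ S₃ := by simpa [hC] using Set.mem_iInter.1 hx 2
      have e0 : x = 0 := by have := Set.mem_inter h1 h2; rw [h12] at this; exact this
      have e1 : x = 1 := by have := Set.mem_inter h1 h3; rw [h13] at this; exact this
      norm_num [e0] at e1
    obtain ⟨s, hcard, hs⟩ := hn 3 C hcoset hempty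
    -- s has at most 2 elements among Fin 3, so some index is missing
    have hmiss : ∃ i : Fin 3, i ∉ s := by
      by_contra hall
      push_neg at hall
      have : s = Finset.univ := Finset.eq_univ_iff_forall.2 hall
      rw [this] at hcard
      simp at hcard
      omega
    obtain ⟨i, hi⟩ := hmiss
    -- produce a point lying in C j for every j ≠ i
    have hpt : ∃ x : ℝ, ∀ j : Fin 3, j ≠ i → x ∈ C j := by
      fin_cases i
      · refine ⟨Real.sqrt 2, fun j hj => ?_⟩
        fin_cases j
        · exact absurd rfl hj
        · exact ⟨1, by push_cast; ring⟩
        · exact ⟨1, by push_cast; ring⟩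
      · refine ⟨1, fun j hj => ?_⟩
        fin_cases j
        · exact ⟨1, by simp⟩
        · exact absurd rfl hj
        · exact ⟨0, by simp⟩
      · refine ⟨0, fun j hj => ?_⟩
        fin_cases j
        · exact ⟨0, by simp⟩
        · exact ⟨0, by simp⟩
        · exact absurd rfl hj
    obtain ⟨x, hx⟩ := hpt
    have : x ∈ ⋂ j ∈ s, C j := by
      refine Set.mem_iInter₂.2 fun j hj => hx j ?_
      rintro rfl
      exact hi hj
    rw [hs] at this
    exact this
end
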